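/- arXiv:1111.1428 — 2 statements merged into one kernel-verified Lean document; each statement's English description precedes it below -/
import Mathlib

section
/- Fix a proper linear subspace L of ℙ^m, an integer d ≥ 2 and a finite set E ⊂ ℙ^m ∖ L with #E ≤ d. Then: (i) dim⟨ν_d(E ∪ L)⟩ = dim⟨ν_d(L)⟩ + #E; (ii) for every closed subscheme U ⊆ L one has ⟨ν_d(U ∪ E)⟩ ∩ ⟨ν_d(L)⟩ = ⟨ν_d(U)⟩; (iii) for every O ∈ ⟨ν_d(L ∪ E)⟩ ∖ ⟨ν_d(E)⟩, the set ⟨{O} ∪ ν_d(E)⟩ ∩ ⟨ν_d(L)⟩ is a single point. -/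
open scoped LinearAlgebra.Projectivization

noncomputable section

/-- The polynomial ring in `m+1` variables over `K`: homogeneous coordinate ring of `ℙ^m`. -/
abbrev PR (K : Type) [Field K] (m : ℕ) : Type := MvPolynomial (Fin (m+1)) K

/-- The space of degree-`d` forms in `m+1` variables. -/
abbrev Hd (K : Type) [Field K] (m d : ℕ) : Submodule K (PR K m) :=
  MvPolynomial.homogeneousSubmodule (Fin (m+1)) K d

/-- Projective `m`-space over `K`. -/
abbrev Pm (K : Type) [Field K] (m : ℕ) := ℙ K (Fin (m+1) → K)

/-- The target projective space `ℙ^n`, `n = C(m+d,m) - 1`, of the degree-`d` Veronese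
embedding, realized as the projectivization of the dual of the space of degree-`d` forms
(the space of degree-`d` symmetric tensors). -/
abbrev PN (K : Type) [Field K] (m d : ℕ) := ℙ K (Module.Dual K (Hd K m d))

variable {K : Type} [Field K] {m : ℕ}

/-- Hilbert function of `R/I` in degree `t`. -/
def hilbQ (I : Ideal (PR K m)) (t : ℕ) : ℕ :=
  Module.finrank K ((Hd K m t).map (Ideal.Quotient.mkₐ K I).toLinearMap)

/-- The degree (length) of the projective scheme defined by `I`: the eventual value of the
Hilbert function of `R/I`. -/
def idealDeg (I : Ideal (PR K m)) : ℕ := Filter.limsup (fun t => hilbQ I t) Filter.atTop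

/-- `h^1(𝓘_Z(d))` for the zero-dimensional scheme `Z` with (saturated) ideal `I`:
it equals `deg Z - dim (R/I)_d`. -/
def h1I (I : Ideal (PR K m)) (d : ℕ) : ℕ := idealDeg I - hilbQ I d

/-- An ideal is homogeneous. -/
def IsHomogI (I : Ideal (PR K m)) : Prop :=
  ∀ f ∈ I, ∀ n : ℕ, MvPolynomial.homogeneousComponent n f ∈ I

/-- An ideal is saturated with respect to the irrelevant maximal ideal. -/
def IsSatI (I : Ideal (PR K m)) : Prop :=
  ∀ f : PR K m, (∀ i, MvPolynomial.X i * f ∈ I) → f ∈ I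

/-- A closed subscheme of `ℙ^m`, given by its saturated homogeneous ideal. -/
structure PSub (K : Type) [Field K] (m : ℕ) where
  I : Ideal (PR K m)
  homog : IsHomogI I
  sat : IsSatI I

/-- A (closed sub)scheme is zero-dimensional iff the Hilbert function of `R/I` is bounded. -/
def IsZeroDimI (I : Ideal (PR K m)) : Prop := ∃ C, ∀ t, hilbQ I t ≤ C

/-- A polynomial vanishes at a projective point (every homogeneous component vanishes
at a representative). -/
def vanishesAt (f : PR K m) (a : Pm K m) : Prop :=
  ∀ n : ℕ, MvPolynomial.eval a.rep (MvPolynomial.homogeneousComponent n f) = 0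

/-- Zero locus of an ideal in `ℙ^m`. -/
def pzeroLocus (I : Ideal (PR K m)) : Set (Pm K m) := {a | ∀ f ∈ I, vanishesAt f a}

/-- The (saturated) homogeneous ideal of a set of points of `ℙ^m`. -/
def idealOfSet (S : Set (Pm K m)) : Ideal (PR K m) :=
  Ideal.span {f : PR K m | (∃ n, f.IsHomogeneous n) ∧ ∀ a ∈ S, MvPolynomial.eval a.rep f = 0}

/-- Saturation of a homogeneous ideal: the smallest saturated homogeneous ideal containing it. -/
def satIdeal (J : Ideal (PR K m)) : Ideal (PR K m) := sInf {J' | J ≤ J' ∧ IsHomogI J' ∧ IsSatI J'}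

/-- The scheme defined by the (saturated) ideal `I` is reduced. -/
def IsReducedI (I : Ideal (PR K m)) : Prop := I = idealOfSet (pzeroLocus I)

/-- Connected component of a zero-dimensional scheme at a point `a`: the largest subscheme
supported at `a`, i.e. the `a`-primary component. -/
def componentAt (I : Ideal (PR K m)) (a : Pm K m) : Ideal (PR K m) :=
  sInf {J | I ≤ J ∧ IsHomogI J ∧ IsSatI J ∧ pzeroLocus J ⊆ {a}}

/-- Residual scheme of `Z` with respect to the hypersurface `f = 0`: the colon ideal `(I_Z : f)`. -/
def resIdeal (I : Ideal (PR K m)) (f : PR K m) : Ideal (PR K m) :=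
  Submodule.colon I (Ideal.span {f})

/-- Degree of the scheme-theoretic intersection of the subschemes defined by `I` and `J`. -/
def interDeg (I J : Ideal (PR K m)) : ℕ := idealDeg (I ⊔ J)

/-- The degree-`d` Veronese image of a vector `v`: the evaluation-at-`v` functional on
degree-`d` forms. -/
def nu (d : ℕ) (v : Fin (m+1) → K) : Module.Dual K (Hd K m d) :=
  (MvPolynomial.aeval v).toLinearMap ∘ₗ (Hd K m d).subtype

/-- The linear span of the Veronese image `ν_d(S)` of a set `S` of points of `ℙ^m`. -/
def dualSpan (d : ℕ) (S : Set (Pm K m)) : Submodule K (Module.Dual K (Hd K m d)) :=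
  Submodule.span K ((fun a => nu d a.rep) '' S)

/-- The linear span `⟨ν_d(Z)⟩` of the Veronese image of the subscheme with ideal `I`:
the annihilator of the degree-`d` part of `I`. -/
def schemeSpanSub (I : Ideal (PR K m)) (d : ℕ) : Submodule K (Module.Dual K (Hd K m d)) where
  carrier := {φ | ∀ f : Hd K m d, (f : PR K m) ∈ I → φ f = 0}
  add_mem' := by
    intro a b ha hb f hf
    simp [LinearMap.add_apply, ha f hf, hb f hf]
  zero_mem' := by intro f hf; simp
  smul_mem' := by
    intro c a ha f hf
    simp [LinearMap.smul_apply, ha f hf]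

/-- `P ∈ ⟨ν_d(Z)⟩`, for `Z` the subscheme with ideal `I`. -/
def inSpanI (I : Ideal (PR K m)) (d : ℕ) (P : PN K m d) : Prop := P.rep ∈ schemeSpanSub I d

/-- `P ∈ ⟨ν_d(S)⟩` for a set `S` of points of `ℙ^m`. -/
def inSpanSet (d : ℕ) (S : Set (Pm K m)) (P : PN K m d) : Prop := P.rep ∈ dualSpan d S

/-- `L` is a linear subspace of `ℙ^m`. -/
def IsLinearSub (L : Set (Pm K m)) : Prop :=
  ∃ W : Submodule K (Fin (m+1) → K), L = {a | a.submodule ≤ W}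

/-- `L` is a line of `ℙ^m`. -/
def IsLine (L : Set (Pm K m)) : Prop :=
  ∃ W : Submodule K (Fin (m+1) → K), Module.finrank K W = 2 ∧ L = {a | a.submodule ≤ W}

/-- `L` is a plane of `ℙ^m`. -/
def IsPlane (L : Set (Pm K m)) : Prop :=
  ∃ W : Submodule K (Fin (m+1) → K), Module.finrank K W = 3 ∧ L = {a | a.submodule ≤ W}

/-- `J` is the (saturated homogeneous) ideal of a conic of `ℙ^m`: a degree-2 curve contained
in a plane (possibly reducible). -/
def IsConic (J : Ideal (PR K m)) : Prop :=
  ∃ (W : Submodule K (Fin (m+1) → K)) (q : PR K m),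
    Module.finrank K W = 3 ∧ q.IsHomogeneous 2 ∧
    q ∉ idealOfSet {a : Pm K m | a.submodule ≤ W} ∧
    J = satIdeal (idealOfSet {a : Pm K m | a.submodule ≤ W} ⊔ Ideal.span {q})

/-- The algebra of polynomial functions on a `K`-vector space. -/
def polyFunctions (K V : Type) [Field K] [AddCommGroup V] [Module K V] : Subalgebra K (V → K) :=
  Algebra.adjoin K {g : V → K | ∃ φ : V →ₗ[K] K, g = ⇑φ}

/-- Zariski closure of a subset of a projective space. -/
def zClosure {V : Type} [AddCommGroup V] [Module K V] (T : Set (ℙ K V)) : Set (ℙ K V) :=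
  {P | ∀ F ∈ polyFunctions K V, (∀ Q ∈ T, ∀ c : K, F (c • Q.rep) = 0) →
    ∀ c : K, F (c • P.rep) = 0}

/-- The Veronese variety `X_{m,d} = ν_d(ℙ^m)` as a subset of `PN K m d`. -/
def XSet (K : Type) [Field K] (m d : ℕ) : Set (PN K m d) :=
  {Q | ∃ a : Pm K m, Q.submodule = Submodule.span K {nu d a.rep}}

/-- The image `ν_d(S)` of a set of points of `ℙ^m`, as a subset of `PN K m d`. -/
def nuSet (d : ℕ) (S : Set (Pm K m)) : Set (PN K m d) :=
  {Q | ∃ a ∈ S, Q.submodule = Submodule.span K {nu d a.rep}}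

/-- The rank of a point `P` of `PN` with respect to a subset `Y ⊆ PN`. -/
def rankWrt {m d : ℕ} (Y : Set (PN K m d)) (P : PN K m d) : ℕ :=
  sInf {r | ∃ S : Finset (PN K m d), ↑S ⊆ Y ∧ S.card = r ∧
    P.rep ∈ Submodule.span K (Projectivization.rep '' (S : Set (PN K m d)))}

/-- The `s`-th secant variety of `Y ⊆ PN`: the Zariski closure of the union of the spans
of `s` points of `Y`. -/
def secantWrt {m d : ℕ} (Y : Set (PN K m d)) (s : ℕ) : Set (PN K m d) :=
  zClosure {Q | ∃ S : Finset (PN K m d), ↑S ⊆ Y ∧ S.card ≤ s ∧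
    Q.rep ∈ Submodule.span K (Projectivization.rep '' (S : Set (PN K m d)))}

/-- The border rank of `P` with respect to `Y ⊆ PN`. -/
def brankWrt {m d : ℕ} (Y : Set (PN K m d)) (P : PN K m d) : ℕ :=
  sInf {s | 0 < s ∧ P ∈ secantWrt Y s}

/-- Symmetric rank. -/
def srank {m : ℕ} (d : ℕ) (P : PN K m d) : ℕ := rankWrt (XSet K m d) P

/-- Border rank. -/
def brank {m : ℕ} (d : ℕ) (P : PN K m d) : ℕ := brankWrt (XSet K m d) P

/-- Cactus rank: minimal degree of a zero-dimensional closed subscheme `E ⊂ ℙ^m` with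
`P ∈ ⟨ν_d(E)⟩`. -/
def crank {m : ℕ} (d : ℕ) (P : PN K m d) : ℕ :=
  sInf {c | ∃ Z : PSub K m, IsZeroDimI Z.I ∧ idealDeg Z.I = c ∧ inSpanI Z.I d P}

/-- `σ_{s,r}(X_{m,d})`. -/
def sigmaSet (K : Type) [Field K] (m d s r : ℕ) : Set (PN K m d) :=
  {P | brank d P = s ∧ srank d P = r}

/-- A property `Φ` holds for a general `k`-tuple of points of the linear subspace of `ℙ^m`
determined by `W`. -/
def GenerallyOn (W : Submodule K (Fin (m+1) → K)) (k : ℕ)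
    (Φ : (Fin k → Pm K m) → Prop) : Prop :=
  ∃ w : Fin 3 → W, Submodule.span K (Set.range fun j => (w j : Fin (m+1) → K)) = W ∧
    ∃ F : MvPolynomial (Fin k × Fin 3) K, F ≠ 0 ∧
      ∀ c : Fin k → Fin 3 → K,
        MvPolynomial.eval (fun p => c p.1 p.2) F ≠ 0 →
        ∀ e : Fin k → Pm K m,
          (∀ i, (e i).submodule = Submodule.span K {∑ j, c i j • (w j : Fin (m+1) → K)}) → Φ e

end
section Aux

open MvPolynomial

variable {K : Type} [Field K] {m : ℕ}

instance hdFD (K : Type) [Field K] (m d : ℕ) : FiniteDimensional K (Hd K m d) :=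
  Submodule.finiteDimensional_of_le
    (S₂ := MvPolynomial.restrictTotalDegree (Fin (m+1)) K d)
    (fun f hf => (MvPolynomial.mem_restrictTotalDegree _ _ f).mpr
      (MvPolynomial.IsHomogeneous.totalDegree_le
        ((MvPolynomial.mem_homogeneousSubmodule _ _).mp hf)))

lemma nu_apply (d : ℕ) (v : Fin (m+1) → K) (f : Hd K m d) :
    nu d v f = MvPolynomial.eval v (f : PR K m) := by
  show MvPolynomial.aeval v (f : PR K m) = _
  rw [MvPolynomial.aeval_def, Algebra.algebraMap_self, MvPolynomial.eval₂_id]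

/-- A linear form, as a multivariate polynomial, from a dual functional. -/
noncomputable def linPoly (φ : Module.Dual K (Fin (m+1) → K)) : PR K m :=
  ∑ i, MvPolynomial.C (φ (Pi.single i 1)) * MvPolynomial.X i

lemma linPoly_isHomog (φ : Module.Dual K (Fin (m+1) → K)) :
    (linPoly φ).IsHomogeneous 1 :=
  MvPolynomial.IsHomogeneous.sum _ _ _ fun i _ => MvPolynomial.isHomogeneous_C_mul_X _ i

lemma eval_linPoly (φ : Module.Dual K (Fin (m+1) → K)) (v : Fin (m+1) → K) :
    MvPolynomial.eval v (linPoly φ) = φ v := by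
  have hv : ∀ i, Pi.single i (v i) = v i • (Pi.single i 1 : Fin (m+1) → K) := by
    intro i
    rw [← Pi.single_smul, smul_eq_mul, mul_one]
  calc MvPolynomial.eval v (linPoly φ) = ∑ i, φ (Pi.single i 1) * v i := by simp [linPoly]
    _ = φ (∑ i, Pi.single i (v i)) := by
        rw [map_sum]
        simp [hv, map_smul, smul_eq_mul, mul_comm]
    _ = φ v := by rw [Finset.univ_sum_single]

lemma exists_dual_of_notMem {V : Type} [AddCommGroup V] [Module K V]
    (W : Submodule K V) {v : V} (hv : v ∉ W) :
    ∃ φ : Module.Dual K V, (∀ w ∈ W, φ w = 0) ∧ φ v ≠ 0 := by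
  have h0 : (Submodule.Quotient.mk v : V ⧸ W) ≠ 0 := by
    simpa [Submodule.Quotient.mk_eq_zero] using hv
  obtain ⟨ψ, hψ⟩ : ∃ ψ : Module.Dual K (V ⧸ W), ψ (Submodule.Quotient.mk v) ≠ 0 := by
    by_contra h
    push_neg at h
    exact h0 ((Module.forall_dual_apply_eq_zero_iff K _).mp h)
  refine ⟨ψ.comp W.mkQ, fun w hw => ?_, hψ⟩
  have : W.mkQ w = 0 := (Submodule.Quotient.mk_eq_zero W).mpr hw
  simp [this]

lemma dualSpan_apply_eq_zero {d : ℕ} {S : Set (Pm K m)} {f : Hd K m d}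
    (hf : ∀ x ∈ S, MvPolynomial.eval x.rep (f : PR K m) = 0)
    {ψ : Module.Dual K (Hd K m d)} (hψ : ψ ∈ dualSpan d S) : ψ f = 0 := by
  induction hψ using Submodule.span_induction with
  | mem x hx =>
    obtain ⟨a, ha, rfl⟩ := hx
    rw [nu_apply]; exact hf a ha
  | zero => simp
  | add x y _ _ hx hy => simp [hx, hy]
  | smul c x _ hx => simp [hx]

/-- Separating degree-`d` form: vanishes on the linear space and on `E \ {a}`, not at `a`. -/
lemma sep_form {d : ℕ} {W : Submodule K (Fin (m+1) → K)} {E : Finset (Pm K m)}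
    (hE : E.card ≤ d) {a : Pm K m} (haW : a.rep ∉ W) (ha : a ∈ E) :
    ∃ f : Hd K m d, (∀ x : Pm K m, x.rep ∈ W → MvPolynomial.eval x.rep (f : PR K m) = 0) ∧
      (∀ b ∈ E, b ≠ a → MvPolynomial.eval b.rep (f : PR K m) = 0) ∧
      MvPolynomial.eval a.rep (f : PR K m) ≠ 0 := by
  classical
  obtain ⟨φ0, hφ0W, hφ0a⟩ := exists_dual_of_notMem W haW
  have hb : ∀ b : Pm K m, b ≠ a → ∃ φ : Module.Dual K (Fin (m+1) → K),
      φ b.rep = 0 ∧ φ a.rep ≠ 0 := by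
    intro b hba
    have hmem : a.rep ∉ (Submodule.span K {b.rep} : Submodule K (Fin (m+1) → K)) := by
      intro hmem
      rw [Submodule.mem_span_singleton] at hmem
      obtain ⟨c, hc⟩ := hmem
      have hab : a = b := by
        rw [← Projectivization.mk_rep a, ← Projectivization.mk_rep b]
        exact (Projectivization.mk_eq_mk_iff' K a.rep b.rep a.rep_nonzero
          b.rep_nonzero).mpr ⟨c, hc⟩
      exact hba hab.symm
    obtain ⟨φ, h1, h2⟩ := exists_dual_of_notMem _ hmem
    exact ⟨φ, h1 b.rep (Submodule.mem_span_singleton_self _), h2⟩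
  choose φb hφb1 hφb2 using hb
  obtain ⟨φg, -, hφg⟩ := exists_dual_of_notMem (⊥ : Submodule K (Fin (m+1) → K))
    (by simpa using Projectivization.rep_nonzero a)
  set p : PR K m := linPoly φ0 * (∏ b ∈ (E.erase a).attach, linPoly (φb b
      (fun h => (Finset.mem_erase.mp b.2).1 h))) * linPoly φg ^ (d - E.card) with hp
  have hcard : (E.erase a).card = E.card - 1 := Finset.card_erase_of_mem ha
  have hdeg : (1 + ∑ _b ∈ (E.erase a).attach, 1) + 1 * (d - E.card) = d := by
    rw [Finset.sum_const, Finset.card_attach, smul_eq_mul, mul_one, one_mul, hcard]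
    have h1 : 1 ≤ E.card := Finset.card_pos.mpr ⟨a, ha⟩
    omega
  have hhom : p.IsHomogeneous d := by
    rw [← hdeg, hp]
    exact (((linPoly_isHomog φ0).mul
      (MvPolynomial.IsHomogeneous.prod _ _ (fun _ => 1)
        (fun b _ => linPoly_isHomog _))).mul ((linPoly_isHomog φg).pow _))
  refine ⟨⟨p, (MvPolynomial.mem_homogeneousSubmodule _ _).mpr hhom⟩, ?_, ?_, ?_⟩
  · intro x hx
    simp only [hp, map_mul, eval_linPoly]
    rw [hφ0W x.rep hx]
    simp
  · intro b hbE hba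
    simp only [hp, map_mul, map_prod, eval_linPoly]
    rw [Finset.prod_eq_zero (Finset.mem_attach _ ⟨b, Finset.mem_erase.mpr ⟨hba, hbE⟩⟩)
      (hφb1 b hba)]
    simp
  · simp only [hp, map_mul, map_pow, map_prod, eval_linPoly]
    exact mul_ne_zero (mul_ne_zero hφ0a
      (Finset.prod_ne_zero_iff.mpr fun b _ => hφb2 _ _)) (pow_ne_zero _ hφg)

end Aux

lemma mem_schemeSpanSub {K : Type} [Field K] {m : ℕ} {I : Ideal (PR K m)} {d : ℕ}
    {φ : Module.Dual K (Hd K m d)} :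
    φ ∈ schemeSpanSub I d ↔ ∀ f : Hd K m d, (f : PR K m) ∈ I → φ f = 0 := Iff.rfl

section Aux2

variable {K : Type} [Field K] {m : ℕ}

lemma nuImage_eq_range {d : ℕ} (E : Finset (Pm K m)) :
    (fun a : Pm K m => nu d a.rep) '' (↑E : Set (Pm K m)) =
      Set.range (fun a : {x // x ∈ E} => nu d (a : Pm K m).rep) := by
  ext y
  constructor
  · rintro ⟨a, ha, rfl⟩; exact ⟨⟨a, ha⟩, rfl⟩
  · rintro ⟨a, rfl⟩; exact ⟨a, a.2, rfl⟩

/-- Coefficients of a combination of Veronese points of `E` lying in `⟨ν_d L⟩` vanish. -/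
lemma key_coeff {d : ℕ} {W : Submodule K (Fin (m+1) → K)} {E : Finset (Pm K m)}
    (hEW : ∀ a ∈ E, a.rep ∉ W) (hE : E.card ≤ d) {L : Set (Pm K m)}
    (hLW : ∀ x ∈ L, x.rep ∈ W)
    (c : {x // x ∈ E} → K)
    (h : (∑ a : {x // x ∈ E}, c a • nu d (a : Pm K m).rep) ∈ dualSpan d L) :
    ∀ a, c a = 0 := by
  intro a
  have haE : (a : Pm K m) ∈ E := a.2
  obtain ⟨f, hf1, hf2, hf3⟩ := sep_form hE (hEW a haE) haE
  have h0 : (∑ b : {x // x ∈ E}, c b • nu d (b : Pm K m).rep) f = 0 :=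
    dualSpan_apply_eq_zero (fun x hx => hf1 x (hLW x hx)) h
  rw [LinearMap.sum_apply] at h0
  rw [Fintype.sum_eq_single a (fun b hba => ?_)] at h0
  · rw [LinearMap.smul_apply, nu_apply, smul_eq_mul] at h0
    exact (mul_eq_zero.mp h0).resolve_right hf3
  · have hne : (b : Pm K m) ≠ (a : Pm K m) := fun hb => hba (Subtype.ext hb)
    rw [LinearMap.smul_apply, nu_apply, hf2 b b.2 hne, smul_zero]

lemma indep_nu {d : ℕ} {W : Submodule K (Fin (m+1) → K)} {E : Finset (Pm K m)}
    (hEW : ∀ a ∈ E, a.rep ∉ W) (hE : E.card ≤ d) :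
    LinearIndependent K (fun a : {x // x ∈ E} => nu d (a : Pm K m).rep) := by
  rw [Fintype.linearIndependent_iff]
  intro c hc
  exact key_coeff hEW hE (L := (∅ : Set (Pm K m))) (fun x hx => absurd hx (Set.notMem_empty x))
    c (by rw [hc]; exact Submodule.zero_mem _)

lemma disjoint_EL {d : ℕ} {W : Submodule K (Fin (m+1) → K)} {E : Finset (Pm K m)}
    (hEW : ∀ a ∈ E, a.rep ∉ W) (hE : E.card ≤ d) {L : Set (Pm K m)}
    (hLW : ∀ x ∈ L, x.rep ∈ W) :
    Disjoint (dualSpan d (E : Set (Pm K m))) (dualSpan d L) := by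
  rw [Submodule.disjoint_def]
  intro ψ hψE hψL
  rw [dualSpan, nuImage_eq_range (K := K) (m := m) (d := d) E,
    Submodule.mem_span_range_iff_exists_fun] at hψE
  obtain ⟨c, hc⟩ := hψE
  have hall : ∀ a, c a = 0 := key_coeff hEW hE hLW c (by rw [hc]; exact hψL)
  rw [← hc]
  simp [hall]

set_option maxHeartbeats 1000000 in
lemma finrank_dualSpan_E {d : ℕ} {W : Submodule K (Fin (m+1) → K)} {E : Finset (Pm K m)}
    (hEW : ∀ a ∈ E, a.rep ∉ W) (hE : E.card ≤ d) :
    Module.finrank K (dualSpan d (E : Set (Pm K m))) = E.card := by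
  have h1 := finrank_span_eq_card (R := K) (M := Module.Dual K (Hd K m d))
    (indep_nu hEW hE)
  rw [Fintype.card_coe] at h1
  rw [dualSpan, nuImage_eq_range (K := K) (m := m) (d := d) E, h1]

lemma eval_idealOfSet {S : Set (Pm K m)} {p : PR K m} (hp : p ∈ idealOfSet S) :
    ∀ x ∈ S, MvPolynomial.eval x.rep p = 0 := by
  intro x hx
  induction hp using Submodule.span_induction with
  | mem q hq => exact hq.2 x hx
  | zero => simp
  | add a b _ _ ha hb => simp [ha, hb]
  | smul cc q _ hq => rw [smul_eq_mul, map_mul, hq, mul_zero]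

lemma mem_idealOfSet_of_vanish {d : ℕ} {S : Set (Pm K m)} (f : Hd K m d)
    (hf : ∀ x ∈ S, MvPolynomial.eval x.rep (f : PR K m) = 0) :
    (f : PR K m) ∈ idealOfSet S :=
  Ideal.subset_span ⟨⟨d, (MvPolynomial.mem_homogeneousSubmodule _ _).mp f.2⟩, hf⟩

lemma spanL_eq_schemeSpan (d : ℕ) (L : Set (Pm K m)) :
    schemeSpanSub (idealOfSet L) d = dualSpan d L := by
  apply le_antisymm
  · set VL : Submodule K (Hd K m d) := ⨅ x ∈ L, LinearMap.ker (nu d x.rep) with hVL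
    have hmemVL : ∀ f : Hd K m d,
        f ∈ VL ↔ ∀ x ∈ L, MvPolynomial.eval x.rep (f : PR K m) = 0 := by
      intro f
      simp [hVL, Submodule.mem_iInf, LinearMap.mem_ker, nu_apply]
    have h1 : VL = (dualSpan d L).dualCoannihilator := by
      ext f
      rw [hmemVL, Submodule.mem_dualCoannihilator]
      constructor
      · intro hv φ hφ; exact dualSpan_apply_eq_zero hv hφ
      · intro hv x hx
        rw [← nu_apply]
        exact hv _ (Submodule.subset_span ⟨x, hx, rfl⟩)
    have h2 : schemeSpanSub (idealOfSet L) d ≤ VL.dualAnnihilator := by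
      intro φ hφ
      rw [Submodule.mem_dualAnnihilator]
      intro f hf
      exact mem_schemeSpanSub.mp hφ f (mem_idealOfSet_of_vanish f ((hmemVL f).mp hf))
    rw [h1] at h2
    rwa [Subspace.dualCoannihilator_dualAnnihilator_eq] at h2
  · intro φ hφ
    rw [mem_schemeSpanSub]
    intro f hf
    exact dualSpan_apply_eq_zero (fun x hx => eval_idealOfSet hf x hx) hφ

lemma eval_coe_sum {d : ℕ} {ι : Type} [Fintype ι] (g : ι → Hd K m d) (c : ι → K)
    (v : Fin (m+1) → K) :
    MvPolynomial.eval v (((∑ a, c a • g a : Hd K m d) : PR K m)) =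
      ∑ a, c a * MvPolynomial.eval v ((g a : PR K m)) := by
  rw [AddSubmonoidClass.coe_finset_sum, map_sum]
  simp [MvPolynomial.smul_eval]

end Aux2
/-- Lemma 3 (`v3`): for a proper linear subspace `L ⊂ ℙ^m`, `d ≥ 2` and a finite set
`E ⊂ ℙ^m ∖ L` with `#E ≤ d`: (i) `dim⟨ν_d(E ∪ L)⟩ = dim⟨ν_d(L)⟩ + #E`; (ii) for every
closed subscheme `U ⊆ L`, `⟨ν_d(U ∪ E)⟩ ∩ ⟨ν_d(L)⟩ = ⟨ν_d(U)⟩`; (iii) for every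
`O ∈ ⟨ν_d(L ∪ E)⟩ ∖ ⟨ν_d(E)⟩`, the set `⟨{O} ∪ ν_d(E)⟩ ∩ ⟨ν_d(L)⟩` is a single point. -/
theorem stmt4 (K : Type) [Field K] [IsAlgClosed K] [CharZero K]
    (m d : ℕ) (hd : 2 ≤ d) (L : Set (Pm K m))
    (hL : ∃ W : Submodule K (Fin (m+1) → K), W ≠ ⊤ ∧ L = {a : Pm K m | a.submodule ≤ W})
    (E : Finset (Pm K m)) (hEL : ∀ a ∈ E, a ∉ L) (hE : E.card ≤ d) :
    (Module.finrank K (dualSpan d ((↑E : Set (Pm K m)) ∪ L)) =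
        Module.finrank K (dualSpan d L) + E.card) ∧
    (∀ U : PSub K m, idealOfSet L ≤ U.I →
      {P : PN K m d | inSpanI (U.I ⊓ idealOfSet (↑E : Set (Pm K m))) d P ∧ inSpanSet d L P} =
        {P : PN K m d | inSpanI U.I d P}) ∧
    (∀ O : PN K m d, inSpanSet d (L ∪ (↑E : Set (Pm K m))) O →
      ¬ inSpanSet d (↑E : Set (Pm K m)) O →
      ∃! Q : PN K m d,
        Q.rep ∈ Submodule.span K (insert O.rep ((fun a => nu d a.rep) '' (↑E : Set (Pm K m)))) ∧
          inSpanSet d L Q) := by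
  classical
  obtain ⟨W, hWtop, rfl⟩ := hL
  have hmemL : ∀ x : Pm K m, x ∈ {a : Pm K m | a.submodule ≤ W} ↔ x.rep ∈ W := by
    intro x
    rw [Set.mem_setOf_eq, Projectivization.submodule_eq, Submodule.span_singleton_le_iff_mem]
  set L : Set (Pm K m) := {a : Pm K m | a.submodule ≤ W} with hLdef
  have hEW : ∀ a ∈ E, a.rep ∉ W := fun a ha h => hEL a ha ((hmemL a).mpr h)
  have hLW : ∀ x ∈ L, x.rep ∈ W := fun x hx => (hmemL x).mp hx
  have hdisj : Disjoint (dualSpan d (E : Set (Pm K m))) (dualSpan d L) :=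
    disjoint_EL hEW hE hLW
  have hsepAll : ∀ a : {x // x ∈ E}, ∃ f : Hd K m d,
      (∀ x : Pm K m, x.rep ∈ W → MvPolynomial.eval x.rep (f : PR K m) = 0) ∧
      (∀ b ∈ E, b ≠ (a : Pm K m) → MvPolynomial.eval b.rep (f : PR K m) = 0) ∧
      MvPolynomial.eval (a : Pm K m).rep (f : PR K m) ≠ 0 :=
    fun a => sep_form hE (hEW a a.2) a.2
  choose F hF1 hF2 hF3 using hsepAll
  refine ⟨?_, ?_, ?_⟩
  · -- part (i)
    have hunion : dualSpan d ((E : Set (Pm K m)) ∪ L)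
        = dualSpan d (E : Set (Pm K m)) ⊔ dualSpan d L := by
      rw [dualSpan, Set.image_union, Submodule.span_union]
      rfl
    have hfr := Submodule.finrank_sup_add_finrank_inf_eq
      (dualSpan d (E : Set (Pm K m))) (dualSpan d L)
    rw [disjoint_iff.mp hdisj, finrank_bot, add_zero] at hfr
    rw [hunion, hfr, finrank_dualSpan_E hEW hE, add_comm]
  · -- part (ii)
    intro U hU
    ext P
    simp only [Set.mem_setOf_eq]
    constructor
    · rintro ⟨hP1, hP2⟩
      rw [inSpanI, mem_schemeSpanSub]
      intro f hf
      set cf : {x // x ∈ E} → K := fun a =>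
        MvPolynomial.eval (a : Pm K m).rep (f : PR K m) /
          MvPolynomial.eval (a : Pm K m).rep ((F a : Hd K m d) : PR K m) with hcf
      set h : Hd K m d := ∑ a : {x // x ∈ E}, cf a • F a with hh
      have hhL : ∀ x ∈ L, MvPolynomial.eval x.rep (h : PR K m) = 0 := by
        intro x hx
        rw [hh, eval_coe_sum]
        refine Finset.sum_eq_zero fun a _ => ?_
        rw [hF1 a x (hLW x hx), mul_zero]
      have hhE : ∀ b ∈ E, MvPolynomial.eval b.rep (h : PR K m)
          = MvPolynomial.eval b.rep (f : PR K m) := by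
        intro b hb
        rw [hh, eval_coe_sum]
        rw [Fintype.sum_eq_single (⟨b, hb⟩ : {x // x ∈ E}) (fun a hab => ?_)]
        · rw [hcf]
          exact div_mul_cancel₀ _ (hF3 ⟨b, hb⟩)
        · have hne : b ≠ (a : Pm K m) := fun hba => hab (Subtype.ext hba.symm)
          rw [hF2 a b hb hne, mul_zero]
      have hhIL : (h : PR K m) ∈ idealOfSet L := mem_idealOfSet_of_vanish h hhL
      have hfh : ((f - h : Hd K m d) : PR K m) ∈ U.I ⊓ idealOfSet (E : Set (Pm K m)) := by
        rw [Submodule.mem_inf]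
        constructor
        · rw [AddSubgroupClass.coe_sub]
          exact Ideal.sub_mem _ hf (hU hhIL)
        · refine mem_idealOfSet_of_vanish (f - h) fun b hb => ?_
          rw [AddSubgroupClass.coe_sub, map_sub, hhE b hb, sub_self]
      have h1 : P.rep (f - h) = 0 := mem_schemeSpanSub.mp hP1 _ hfh
      have h2 : P.rep h = 0 := dualSpan_apply_eq_zero hhL hP2
      have : P.rep f = P.rep (f - h) + P.rep h := by rw [← map_add, sub_add_cancel]
      rw [this, h1, h2, add_zero]
    · intro hP
      refine ⟨fun f hf => mem_schemeSpanSub.mp hP f (Submodule.mem_inf.mp hf).1, ?_⟩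
      rw [inSpanSet, ← spanL_eq_schemeSpan d L]
      exact fun f hf => mem_schemeSpanSub.mp hP f (hU hf)
  · -- part (iii)
    intro O hO hOE
    rw [inSpanSet] at hO hOE
    have hunion : dualSpan d (L ∪ (E : Set (Pm K m)))
        = dualSpan d L ⊔ dualSpan d (E : Set (Pm K m)) := by
      rw [dualSpan, Set.image_union, Submodule.span_union]
      rfl
    rw [hunion, Submodule.mem_sup] at hO
    obtain ⟨ℓ, hℓL, e, heE, hsum⟩ := hO
    have hℓ0 : ℓ ≠ 0 := by
      rintro rfl
      rw [zero_add] at hsum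
      exact hOE (hsum ▸ heE)
    obtain ⟨u, hu⟩ := Projectivization.exists_smul_eq_mk_rep K ℓ hℓ0
    refine ⟨Projectivization.mk K ℓ hℓ0, ⟨?_, ?_⟩, ?_⟩
    · rw [← hu]
      have hOmem : O.rep ∈ Submodule.span K
          (insert O.rep ((fun a => nu d a.rep) '' (E : Set (Pm K m)))) :=
        Submodule.subset_span (Set.mem_insert _ _)
      have heMem : e ∈ Submodule.span K
          (insert O.rep ((fun a => nu d a.rep) '' (E : Set (Pm K m)))) :=
        Submodule.span_mono (Set.subset_insert _ _) heE
      have hle : ℓ = O.rep - e := by rw [← hsum]; abel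
      rw [hle]
      exact Submodule.smul_mem _ _ (Submodule.sub_mem _ hOmem heMem)
    · show _ ∈ dualSpan d L
      rw [← hu]
      exact Submodule.smul_mem _ _ hℓL
    · rintro Q' ⟨hQ'1, hQ'2⟩
      rw [Submodule.mem_span_insert] at hQ'1
      obtain ⟨t, z, hz, hQ'eq⟩ := hQ'1
      have hdiff : Q'.rep - t • ℓ ∈ dualSpan d (E : Set (Pm K m)) := by
        have heq : Q'.rep - t • ℓ = t • e + z := by
          rw [hQ'eq, ← hsum, smul_add]
          abel
        rw [heq]
        exact Submodule.add_mem _ (Submodule.smul_mem _ _ heE) hz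
      have hdiffL : Q'.rep - t • ℓ ∈ dualSpan d L :=
        Submodule.sub_mem _ hQ'2 (Submodule.smul_mem _ _ hℓL)
      have h0 : Q'.rep - t • ℓ = 0 := Submodule.disjoint_def.mp hdisj _ hdiff hdiffL
      have hQrep : Q'.rep = t • ℓ := sub_eq_zero.mp h0
      have ht : t ≠ 0 := by
        rintro rfl
        exact Q'.rep_nonzero (by simpa using hQrep)
      rw [← Projectivization.mk_rep Q']
      exact (Projectivization.mk_eq_mk_iff' K Q'.rep ℓ Q'.rep_nonzero hℓ0).mpr ⟨t, hQrep.symm⟩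
end

section
/- Fix integers m ≥ 1, d ≥ 3 and 2 ≤ s ≤ (d+1)/2. If P ∈ ℙ^n satisfies br(P) = s and sr(P) = r with r > s, then s + r ≥ d + 2. Equivalently, σ_{s,r}(X_{m,d}) = ∅ for every r with s+1 ≤ r ≤ d+1−s. -/
open scoped LinearAlgebra.Projectivization

namespace Stmt12Aux
open MvPolynomial

variable {K : Type} [Field K] {m : ℕ}

lemma my_aeval_eq_eval (v : Fin (m+1) → K) (f : MvPolynomial (Fin (m+1)) K) :
    MvPolynomial.aeval v f = MvPolynomial.eval v f := by
  rw [MvPolynomial.aeval_def, Algebra.algebraMap_self]; rfl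

lemma eval_smul_pow {f : MvPolynomial (Fin (m+1)) K} {n : ℕ} (hf : f.IsHomogeneous n)
    (c : K) (v : Fin (m+1) → K) :
    MvPolynomial.eval (c • v) f = c ^ n * MvPolynomial.eval v f := by
  rw [eval_eq', eval_eq', Finset.mul_sum]
  refine Finset.sum_congr rfl fun d hd => ?_
  have hdeg : (Finsupp.weight (1 : Fin (m+1) → ℕ)) d = n :=
    hf (MvPolynomial.mem_support_iff.mp hd)
  have hsum : ∑ i, d i = n := by
    rw [← hdeg, Finsupp.weight_apply, Finsupp.sum]
    rw [Finset.sum_subset (Finset.subset_univ d.support)]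
    · simp
    · intro x _ hx
      simp [Finsupp.notMem_support_iff.mp hx]
  calc f.coeff d * ∏ i, (c • v) i ^ d i
      = f.coeff d * ∏ i, (c ^ d i * v i ^ d i) := by
        simp [Pi.smul_apply, smul_eq_mul, mul_pow]
    _ = f.coeff d * ((∏ i, c ^ d i) * ∏ i, v i ^ d i) := by rw [Finset.prod_mul_distrib]
    _ = c ^ n * (f.coeff d * ∏ i, v i ^ d i) := by
        rw [Finset.prod_pow_eq_pow_sum, hsum]; ring

lemma exists_sep {x w : Fin (m+1) → K} (hx : x ∉ Submodule.span K {w}) :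
    ∃ L : (Fin (m+1) → K) →ₗ[K] K, L w = 0 ∧ L x ≠ 0 := by
  set W := Submodule.span K {w}
  have hxq : W.mkQ x ≠ 0 := by
    simpa [Submodule.mkQ_apply, Submodule.Quotient.mk_eq_zero] using hx
  obtain ⟨φ, hφ⟩ : ∃ φ : Module.Dual K ((Fin (m+1) → K) ⧸ W), φ (W.mkQ x) ≠ 0 := by
    by_contra h
    push_neg at h
    exact hxq ((Module.forall_dual_apply_eq_zero_iff K _).mp h)
  refine ⟨φ ∘ₗ W.mkQ, ?_, hφ⟩
  have : W.mkQ w = 0 := by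
    simp [Submodule.mkQ_apply, Submodule.Quotient.mk_eq_zero,
      Submodule.mem_span_singleton_self, W]
  simp [this]

lemma exists_nz {x : Fin (m+1) → K} (hx : x ≠ 0) :
    ∃ L : (Fin (m+1) → K) →ₗ[K] K, L x ≠ 0 := by
  by_contra h
  push_neg at h
  exact hx ((Module.forall_dual_apply_eq_zero_iff K x).mp h)

/-- Linear polynomial attached to a linear functional. -/
noncomputable def linP (L : (Fin (m+1) → K) →ₗ[K] K) : MvPolynomial (Fin (m+1)) K :=
  ∑ i, MvPolynomial.C (L (Pi.single i 1)) * MvPolynomial.X i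

lemma linP_homog (L : (Fin (m+1) → K) →ₗ[K] K) : (linP L).IsHomogeneous 1 :=
  MvPolynomial.IsHomogeneous.sum _ _ _ fun i _ => isHomogeneous_C_mul_X _ i

lemma eval_linP (L : (Fin (m+1) → K) →ₗ[K] K) (v : Fin (m+1) → K) :
    MvPolynomial.eval v (linP L) = L v := by
  have hv : ∀ i, Pi.single i (v i) = v i • (Pi.single i 1 : Fin (m+1) → K) := by
    intro i; funext j
    simp [Pi.single_apply, Pi.smul_apply, smul_eq_mul, mul_ite]
  conv_rhs => rw [← Finset.univ_sum_single v]
  rw [map_sum, linP, map_sum]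
  refine Finset.sum_congr rfl fun i _ => ?_
  rw [hv i, map_smul, smul_eq_mul]
  simp [mul_comm]

lemma det_vanish {n t : ℕ} (h : t < n) (A : Matrix (Fin n) (Fin t) K)
    (B : Matrix (Fin t) (Fin n) K) : (A * B).det = 0 := by
  classical
  have hni : ¬ Function.Injective (Matrix.mulVecLin B) := by
    intro hinj
    have := LinearMap.finrank_le_finrank_of_injective hinj
    simp only [Module.finrank_fin_fun] at this
    omega
  rw [← LinearMap.ker_eq_bot] at hni
  obtain ⟨x, hxmem, hx0⟩ := Submodule.exists_mem_ne_zero_of_ne_bot hni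
  rw [← Matrix.exists_mulVec_eq_zero_iff]
  refine ⟨x, hx0, ?_⟩
  have hBx : B.mulVec x = 0 := by
    have := LinearMap.mem_ker.mp hxmem
    rwa [Matrix.mulVecLin_apply] at this
  rw [← Matrix.mulVec_mulVec, hBx, Matrix.mulVec_zero]

end Stmt12Aux

namespace Stmt12Aux
open MvPolynomial

variable {K : Type} [Field K] {m : ℕ}

lemma nu_apply (d : ℕ) (v : Fin (m+1) → K) (f : Hd K m d) :
    nu d v f = MvPolynomial.eval v (f : PR K m) := by
  rw [← my_aeval_eq_eval]; rfl

lemma nu_smul (d : ℕ) (c : K) (v : Fin (m+1) → K) :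
    nu (m := m) d (c • v) = c ^ d • nu d v := by
  apply LinearMap.ext
  intro f
  have hf : (f : PR K m).IsHomogeneous d := f.2
  rw [LinearMap.smul_apply, nu_apply, nu_apply, smul_eq_mul]
  exact eval_smul_pow hf c v

lemma detFun_mem {d n : ℕ} (N : Fin n → Fin n → Hd K m d) :
    (fun ψ : Module.Dual K (Hd K m d) => (Matrix.of fun i j => ψ (N i j)).det) ∈
      polyFunctions K (Module.Dual K (Hd K m d)) := by
  classical
  have hgen : ∀ x : Hd K m d,
      (fun ψ : Module.Dual K (Hd K m d) => ψ x) ∈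
        polyFunctions K (Module.Dual K (Hd K m d)) := by
    intro x
    exact Algebra.subset_adjoin
      ⟨{ toFun := fun ψ => ψ x, map_add' := fun a b => rfl,
         map_smul' := fun c a => rfl }, rfl⟩
  have hdet : (fun ψ : Module.Dual K (Hd K m d) => (Matrix.of fun i j => ψ (N i j)).det)
      = ∑ σ : Equiv.Perm (Fin n),
          ((Equiv.Perm.sign σ : ℤ) : K) •
            ∏ i, (fun ψ : Module.Dual K (Hd K m d) => ψ (N (σ i) i)) := by
    funext ψ
    rw [Matrix.det_apply]
    simp [Finset.sum_apply, Finset.prod_apply, Units.smul_def, zsmul_eq_mul,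
      Pi.smul_apply, smul_eq_mul]
  rw [hdet]
  refine Subalgebra.sum_mem _ fun σ _ => ?_
  exact Subalgebra.smul_mem _ (Subalgebra.prod_mem _ fun i _ => hgen _) _

end Stmt12Aux


namespace Stmt12Aux

lemma main_contra (K : Type) [Field K] (m d s r : ℕ)
    (hs : 2 ≤ s) (hrd : s + r ≤ d + 1) (hlt : s < r)
    (P : PN K m d) (hbr : brank d P = s) (hsr : srank d P = r) : False := by
  classical
  -- extract the rank-r decomposition
  have hsr' : sInf {r' : ℕ | ∃ S : Finset (PN K m d), ↑S ⊆ XSet K m d ∧ S.card = r' ∧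
      P.rep ∈ Submodule.span K (Projectivization.rep '' (S : Set (PN K m d)))} = r := hsr
  have hRne : {r' : ℕ | ∃ S : Finset (PN K m d), ↑S ⊆ XSet K m d ∧ S.card = r' ∧
      P.rep ∈ Submodule.span K (Projectivization.rep '' (S : Set (PN K m d)))}.Nonempty := by
    by_contra h
    rw [Set.not_nonempty_iff_eq_empty] at h
    rw [h, Nat.sInf_empty] at hsr'
    omega
  have hrmem := hsr' ▸ Nat.sInf_mem hRne
  obtain ⟨S, hSX, hScard, hPspan⟩ := hrmem
  have hmin : ∀ r' ∈ {r' : ℕ | ∃ S : Finset (PN K m d), ↑S ⊆ XSet K m d ∧ S.card = r' ∧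
      P.rep ∈ Submodule.span K (Projectivization.rep '' (S : Set (PN K m d)))}, r ≤ r' :=
    fun r' h => hsr' ▸ Nat.sInf_le h
  -- extract border-rank membership
  have hbr' : sInf {t : ℕ | 0 < t ∧ P ∈ secantWrt (XSet K m d) t} = s := hbr
  have hBne : {t : ℕ | 0 < t ∧ P ∈ secantWrt (XSet K m d) t}.Nonempty := by
    by_contra h
    rw [Set.not_nonempty_iff_eq_empty] at h
    rw [h, Nat.sInf_empty] at hbr'
    omega
  have hPsec : P ∈ secantWrt (XSet K m d) s := (hbr' ▸ Nat.sInf_mem hBne).2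
  -- enumerate S
  let q : Fin r → PN K m d := fun k => (S.equivFin.symm (Fin.cast hScard.symm k) : PN K m d)
  have hqS : ∀ k, q k ∈ S := fun k => (S.equivFin.symm (Fin.cast hScard.symm k)).2
  have hqinj : Function.Injective q := by
    intro a b hab
    have h1 : S.equivFin.symm (Fin.cast hScard.symm a) =
        S.equivFin.symm (Fin.cast hScard.symm b) := Subtype.ext hab
    have h2 := S.equivFin.symm.injective h1
    have h3 := congrArg Fin.val h2
    exact Fin.ext h3
  have hSrange : (S : Set (PN K m d)) = Set.range q := by
    ext x
    simp only [Set.mem_range]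
    constructor
    · intro hx
      refine ⟨Fin.cast hScard (S.equivFin ⟨x, hx⟩), ?_⟩
      have : Fin.cast hScard.symm (Fin.cast hScard (S.equivFin ⟨x, hx⟩)) =
          S.equivFin ⟨x, hx⟩ := by
        apply Fin.ext; simp
      simp only [q, this, Equiv.symm_apply_apply]
    · rintro ⟨k, rfl⟩; exact hqS k
  -- base points in ℙ^m
  have hXq : ∀ k, ∃ a : Pm K m, (q k).submodule = Submodule.span K {nu d a.rep} :=
    fun k => hSX (hqS k)
  choose pt hpt using hXq
  let u : Fin r → (Fin (m+1) → K) := fun k => (pt k).rep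
  have hune : ∀ k, u k ≠ 0 := fun k => Projectivization.rep_nonzero _
  have husub : ∀ k, (q k).submodule = Submodule.span K {nu d (u k)} := hpt
  have hrep : ∀ k, ∃ c' : K, c' ≠ 0 ∧ (q k).rep = c' • nu d (u k) := by
    intro k
    have h1 : (q k).rep ∈ Submodule.span K {nu d (u k)} := by
      rw [← husub k, Projectivization.submodule_eq]
      exact Submodule.mem_span_singleton_self _
    obtain ⟨c', hc'⟩ := Submodule.mem_span_singleton.mp h1
    refine ⟨c', ?_, hc'.symm⟩
    rintro rfl
    rw [zero_smul] at hc'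
    exact Projectivization.rep_nonzero (q k) hc'.symm
  choose c' hc'ne hc'eq using hrep
  -- the base points are pairwise non-proportional
  have hdist : ∀ k k' : Fin r, k ≠ k' → u k ∉ Submodule.span K {u k'} := by
    intro k k' hkk' hmem
    obtain ⟨a, ha⟩ := Submodule.mem_span_singleton.mp hmem
    have ha0 : a ≠ 0 := by
      rintro rfl
      rw [zero_smul] at ha
      exact hune k ha.symm
    have hnu : nu d (u k) = a ^ d • nu d (u k') := by rw [← ha, nu_smul]
    apply hkk'
    apply hqinj
    apply Projectivization.submodule_injective
    rw [husub k, husub k', hnu]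
    exact Submodule.span_singleton_smul_eq (ha0.isUnit.pow d) _
  -- coefficients
  rw [hSrange, ← Set.range_comp] at hPspan
  obtain ⟨γ, hγ⟩ := (Submodule.mem_span_range_iff_exists_fun K).mp hPspan
  let c : Fin r → K := fun k => γ k * c' k
  have hc : P.rep = ∑ k, c k • nu d (u k) := by
    rw [← hγ]
    refine Finset.sum_congr rfl fun k _ => ?_
    show γ k • (q k).rep = (γ k * c' k) • nu d (u k)
    rw [hc'eq k, smul_smul]
  have hcne : ∀ k, c k ≠ 0 := by
    intro k0 hk0
    have hγ0 : γ k0 = 0 := by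
      rcases mul_eq_zero.mp hk0 with h | h
      · exact h
      · exact absurd h (hc'ne k0)
    have hP' : P.rep ∈ Submodule.span K
        (Projectivization.rep '' ((S.erase (q k0)) : Set (PN K m d))) := by
      rw [← hγ]
      refine Submodule.sum_mem _ fun k _ => ?_
      by_cases hk : k = k0
      · subst hk
        show γ k • (q k).rep ∈ _
        rw [hγ0, zero_smul]
        exact Submodule.zero_mem _
      · refine Submodule.smul_mem _ _ (Submodule.subset_span ?_)
        exact ⟨q k, Finset.mem_coe.mpr (Finset.mem_erase.mpr
          ⟨fun h => hk (hqinj h), hqS k⟩), rfl⟩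
    have hmem : r - 1 ∈ {r' : ℕ | ∃ S : Finset (PN K m d), ↑S ⊆ XSet K m d ∧ S.card = r' ∧
        P.rep ∈ Submodule.span K (Projectivization.rep '' (S : Set (PN K m d)))} := by
      refine ⟨S.erase (q k0), ?_, ?_, hP'⟩
      · exact Set.Subset.trans (Finset.coe_subset.mpr (Finset.erase_subset _ _)) hSX
      · rw [Finset.card_erase_of_mem (hqS k0), hScard]
    have := hmin _ hmem
    omega
  -- separating linear functionals
  have hr1 : s + 1 ≤ r := hlt
  let ε : Fin (s+1) → Fin r := Fin.castLE hr1
  have hεinj : Function.Injective ε := by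
    intro a b h
    have h2 : (ε a).val = (ε b).val := congrArg Fin.val h
    exact Fin.ext h2
  have hLex : ∀ i j : Fin r, ∃ L : (Fin (m+1) → K) →ₗ[K] K,
      i ≠ j → (L (u j) = 0 ∧ L (u i) ≠ 0) := by
    intro i j
    by_cases h : i = j
    · exact ⟨0, fun hij => absurd h hij⟩
    · obtain ⟨L, h1, h2⟩ := exists_sep (hdist i j h)
      exact ⟨L, fun _ => ⟨h1, h2⟩⟩
  choose L hL using hLex
  choose L0 hL0 using fun k => exists_nz (hune k)
  -- the forms g and e
  let g : Fin (s+1) → PR K m := fun i => ∏ j ∈ Finset.univ.erase (ε i), linP (L (ε i) j)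
  let e : Fin (s+1) → PR K m := fun j =>
    (∏ i ∈ Finset.univ.erase j, linP (L (ε j) (ε i))) * (linP (L0 (ε j))) ^ (d + 1 - r - s)
  have hg_hom : ∀ i, (g i).IsHomogeneous (r - 1) := by
    intro i
    have h1 := MvPolynomial.IsHomogeneous.prod (Finset.univ.erase (ε i))
      (fun j => linP (L (ε i) j)) (fun _ => 1) (fun j _ => linP_homog _)
    have h2 : ∑ _j ∈ Finset.univ.erase (ε i), 1 = r - 1 := by
      rw [Finset.sum_const, smul_eq_mul, mul_one,
        Finset.card_erase_of_mem (Finset.mem_univ _), Finset.card_univ, Fintype.card_fin]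
    rwa [h2] at h1
  have he_hom : ∀ j, (e j).IsHomogeneous (d + 1 - r) := by
    intro j
    have h1 := MvPolynomial.IsHomogeneous.prod (Finset.univ.erase j)
      (fun i => linP (L (ε j) (ε i))) (fun _ => 1) (fun i _ => linP_homog _)
    have h2 : ∑ _i ∈ Finset.univ.erase j, 1 = s := by
      rw [Finset.sum_const, smul_eq_mul, mul_one,
        Finset.card_erase_of_mem (Finset.mem_univ _), Finset.card_univ, Fintype.card_fin]
      omega
    rw [h2] at h1
    have h3 := (linP_homog (L0 (ε j))).pow (d + 1 - r - s)
    rw [one_mul] at h3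
    have h4 := h1.mul h3
    have h5 : s + (d + 1 - r - s) = d + 1 - r := by omega
    rwa [h5] at h4
  have harith : (r - 1) + (d + 1 - r) = d := by omega
  have hGm : ∀ i j, (g i * e j) ∈ Hd K m d := by
    intro i j
    rw [MvPolynomial.mem_homogeneousSubmodule]
    have := (hg_hom i).mul (he_hom j)
    rwa [harith] at this
  -- evaluation facts
  have hgval0 : ∀ (i : Fin (s+1)) (k : Fin r), k ≠ ε i →
      MvPolynomial.eval (u k) (g i) = 0 := by
    intro i k hk
    show MvPolynomial.eval (u k) (∏ j ∈ Finset.univ.erase (ε i), linP (L (ε i) j)) = 0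
    rw [map_prod]
    apply Finset.prod_eq_zero (Finset.mem_erase.mpr ⟨hk, Finset.mem_univ k⟩)
    rw [eval_linP]
    exact (hL (ε i) k (Ne.symm hk)).1
  have hgvalne : ∀ i : Fin (s+1), MvPolynomial.eval (u (ε i)) (g i) ≠ 0 := by
    intro i
    show MvPolynomial.eval (u (ε i)) (∏ j ∈ Finset.univ.erase (ε i), linP (L (ε i) j)) ≠ 0
    rw [map_prod]
    refine Finset.prod_ne_zero_iff.mpr fun j hj => ?_
    rw [eval_linP]
    exact (hL (ε i) j (Ne.symm (Finset.mem_erase.mp hj).1)).2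
  have heval0 : ∀ i j : Fin (s+1), i ≠ j → MvPolynomial.eval (u (ε i)) (e j) = 0 := by
    intro i j hij
    show MvPolynomial.eval (u (ε i))
      ((∏ i' ∈ Finset.univ.erase j, linP (L (ε j) (ε i'))) *
        (linP (L0 (ε j))) ^ (d + 1 - r - s)) = 0
    rw [map_mul, map_prod]
    have h0 : MvPolynomial.eval (u (ε i)) (linP (L (ε j) (ε i))) = 0 := by
      rw [eval_linP]
      exact (hL (ε j) (ε i) (fun h => hij (hεinj h).symm)).1
    rw [Finset.prod_eq_zero (Finset.mem_erase.mpr ⟨hij, Finset.mem_univ i⟩) h0, zero_mul]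
  have hevalne : ∀ j : Fin (s+1), MvPolynomial.eval (u (ε j)) (e j) ≠ 0 := by
    intro j
    show MvPolynomial.eval (u (ε j))
      ((∏ i' ∈ Finset.univ.erase j, linP (L (ε j) (ε i'))) *
        (linP (L0 (ε j))) ^ (d + 1 - r - s)) ≠ 0
    rw [map_mul, map_prod, map_pow]
    refine mul_ne_zero ?_ (pow_ne_zero _ ?_)
    · refine Finset.prod_ne_zero_iff.mpr fun i' hi' => ?_
      rw [eval_linP]
      exact (hL (ε j) (ε i') (fun h => (Finset.mem_erase.mp hi').1 (hεinj h).symm)).2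
    · rw [eval_linP]; exact hL0 (ε j)
  -- the determinantal polynomial function
  let N : Fin (s+1) → Fin (s+1) → Hd K m d := fun i j => ⟨g i * e j, hGm i j⟩
  have hFmem := detFun_mem (K := K) (m := m) N
  have hvan : ∀ Q ∈ {Q : PN K m d | ∃ S₀ : Finset (PN K m d), ↑S₀ ⊆ XSet K m d ∧
      S₀.card ≤ s ∧ Q.rep ∈ Submodule.span K (Projectivization.rep '' (S₀ : Set (PN K m d)))},
      ∀ cc : K, (fun ψ : Module.Dual K (Hd K m d) =>
        (Matrix.of fun i j => ψ (N i j)).det) (cc • Q.rep) = 0 := by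
    rintro Q ⟨S₀, hS₀X, hS₀card, hQ⟩ cc
    let q₀ : Fin S₀.card → PN K m d := fun k => (S₀.equivFin.symm k : PN K m d)
    have hq₀S : ∀ k, q₀ k ∈ S₀ := fun k => (S₀.equivFin.symm k).2
    have hXq₀ : ∀ k, ∃ a : Pm K m, (q₀ k).submodule = Submodule.span K {nu d a.rep} :=
      fun k => hS₀X (hq₀S k)
    choose pt₀ hpt₀ using hXq₀
    let u₀ : Fin S₀.card → (Fin (m+1) → K) := fun k => (pt₀ k).rep
    have hrep₀ : ∀ k, (q₀ k).rep ∈ Submodule.span K {nu d (u₀ k)} := by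
      intro k
      rw [← hpt₀ k, Projectivization.submodule_eq]
      exact Submodule.mem_span_singleton_self _
    have hsub : Submodule.span K (Projectivization.rep '' (S₀ : Set (PN K m d))) ≤
        Submodule.span K (Set.range fun k => nu d (u₀ k)) := by
      rw [Submodule.span_le]
      rintro x ⟨Q', hQ', rfl⟩
      have hex : ∃ k, q₀ k = Q' := ⟨S₀.equivFin ⟨Q', hQ'⟩, by simp [q₀]⟩
      obtain ⟨k, rfl⟩ := hex
      obtain ⟨a, ha⟩ := Submodule.mem_span_singleton.mp (hrep₀ k)
      rw [← ha]
      exact Submodule.smul_mem _ _ (Submodule.subset_span ⟨k, rfl⟩)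
    obtain ⟨μ, hμ⟩ := (Submodule.mem_span_range_iff_exists_fun K).mp
      (Submodule.smul_mem _ cc (hsub hQ))
    have hfac : (Matrix.of fun i j => (cc • Q.rep) (N i j)) =
        (Matrix.of fun (i : Fin (s+1)) (k : Fin S₀.card) =>
          μ k * MvPolynomial.eval (u₀ k) (g i)) *
        (Matrix.of fun (k : Fin S₀.card) (j : Fin (s+1)) =>
          MvPolynomial.eval (u₀ k) (e j)) := by
      ext i j
      rw [Matrix.mul_apply]
      simp only [Matrix.of_apply]
      rw [← hμ, LinearMap.sum_apply]
      refine Finset.sum_congr rfl fun k _ => ?_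
      rw [LinearMap.smul_apply, smul_eq_mul, nu_apply]
      show μ k * MvPolynomial.eval (u₀ k) (g i * e j) = _
      rw [map_mul]; ring
    show (Matrix.of fun i j => (cc • Q.rep) (N i j)).det = 0
    rw [hfac]
    exact det_vanish (Nat.lt_succ_of_le hS₀card) _ _
  have hPzero := hPsec _ hFmem hvan 1
  have hPzero' : (Matrix.of fun i j => P.rep (N i j)).det = 0 := by
    rw [one_smul] at hPzero
    exact hPzero
  -- but the matrix is diagonal with nonzero entries
  have hdiag : (Matrix.of fun i j => P.rep (N i j)) =
      Matrix.diagonal (fun i => c (ε i) * MvPolynomial.eval (u (ε i)) (g i) *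
        MvPolynomial.eval (u (ε i)) (e i)) := by
    ext i j
    rw [Matrix.of_apply, hc, LinearMap.sum_apply]
    have hterm : ∀ k : Fin r, (c k • nu d (u k)) (N i j) =
        c k * MvPolynomial.eval (u k) (g i) * MvPolynomial.eval (u k) (e j) := by
      intro k
      rw [LinearMap.smul_apply, smul_eq_mul, nu_apply]
      show c k * MvPolynomial.eval (u k) (g i * e j) = _
      have hck : c k = γ k * c' k := rfl
      rw [map_mul, hck]
      ring
    have hsum : ∑ k, (c k • nu d (u k)) (N i j) =
        ∑ k, c k * MvPolynomial.eval (u k) (g i) * MvPolynomial.eval (u k) (e j) :=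
      Finset.sum_congr rfl fun k _ => hterm k
    rw [hsum, Finset.sum_eq_single (ε i)]
    · by_cases hij : i = j
      · subst hij
        rw [Matrix.diagonal_apply_eq]
      · rw [Matrix.diagonal_apply_ne _ hij, heval0 i j hij, mul_zero]
    · intro k _ hk
      rw [hgval0 i k hk, mul_zero, zero_mul]
    · intro h; exact absurd (Finset.mem_univ _) h
  rw [hdiag, Matrix.det_diagonal] at hPzero'
  exact Finset.prod_ne_zero_iff.mpr (fun i _ =>
    mul_ne_zero (mul_ne_zero (hcne _) (hgvalne i)) (hevalne i)) hPzero'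

end Stmt12Aux

/-- First gap: for `m ≥ 1`, `d ≥ 3`, `2 ≤ s ≤ (d+1)/2`, any `P` with `br(P) = s`,
`sr(P) = r` and `r > s` satisfies `s + r ≥ d + 2`; equivalently `σ_{s,r}(X_{m,d}) = ∅`
for `s+1 ≤ r ≤ d+1-s`. -/
theorem stmt12 (K : Type) [Field K] [IsAlgClosed K] [CharZero K]
    (m d s : ℕ) (hm : 1 ≤ m) (hd : 3 ≤ d) (hs : 2 ≤ s) (hsd : 2 * s ≤ d + 1) :
    (∀ P : PN K m d, ∀ r : ℕ, brank d P = s → srank d P = r → s < r → d + 2 ≤ s + r) ∧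
    (∀ r : ℕ, s + 1 ≤ r → r + s ≤ d + 1 → sigmaSet K m d s r = ∅) := by
  constructor
  · intro P r hbr hsr hlt
    by_contra hcon
    push_neg at hcon
    exact Stmt12Aux.main_contra K m d s r hs (by omega) hlt P hbr hsr
  · intro r h1 h2
    ext P
    simp only [sigmaSet, Set.mem_setOf_eq, Set.mem_empty_iff_false, iff_false]
    rintro ⟨hbr, hsr⟩
    exact Stmt12Aux.main_contra K m d s r hs (by omega) (by omega) P hbr hsr
end
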